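/- Fix m₀ ∈ ℕ, m₀ ≥ 1, εₙ = n^{−m₀/(2m₀+1)}(log n)^{1/2} and (τ²)* = n^{−1/(2m₀+1)}. Let α ∈ (0,1] and βₙ = c_β nεₙ²/(τ²)* for some c_β > 0, and let p_n be the Gamma(α, βₙ) density p_n(τ²) = βₙ^α/Γ(α) · (τ²)^{α−1} e^{−βₙ τ²}. Then p_n is decreasing on (0,∞); there exists c₁ > 0 with p_n(c₁(τ²)*) ≥ exp(−nεₙ²) for all large n; and there exists c₂ > 0 with ∫_{c₂(τ²)*}^∞ p_n(τ²)dτ² ≤ exp(−5nεₙ²) for all large n. -/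

import Mathlib

open MeasureTheory Real


lemma aux_antitone (C b α : ℝ) (hC : 0 ≤ C) (hb : 0 ≤ b) (hα1 : α ≤ 1) :
    AntitoneOn (fun τ : ℝ => C * τ ^ (α - 1) * Real.exp (-(b * τ))) (Set.Ioi 0) := by
  intro x hx y hy hxy
  simp only [Set.mem_Ioi] at hx hy
  have h1 : y ^ (α - 1) ≤ x ^ (α - 1) :=
    Real.rpow_le_rpow_of_nonpos hx hxy (by linarith)
  have h2 : Real.exp (-(b * y)) ≤ Real.exp (-(b * x)) :=
    Real.exp_le_exp.2 (by nlinarith)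
  have h3 : (0:ℝ) ≤ y ^ (α - 1) := Real.rpow_nonneg hy.le _
  have h4 : (0:ℝ) ≤ Real.exp (-(b * y)) := (Real.exp_pos _).le
  calc C * y ^ (α - 1) * Real.exp (-(b * y))
      ≤ C * x ^ (α - 1) * Real.exp (-(b * y)) := by
        apply mul_le_mul_of_nonneg_right _ h4
        exact mul_le_mul_of_nonneg_left h1 hC
    _ ≤ C * x ^ (α - 1) * Real.exp (-(b * x)) := by
        apply mul_le_mul_of_nonneg_left h2
        exact mul_nonneg hC (Real.rpow_nonneg (hx.le) _)

lemma aux_int_exp (a b : ℝ) (hb : 0 < b) :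
    (∫ x in Set.Ioi a, Real.exp (-(b * x))) = Real.exp (-(b * a)) / b := by
  have := integral_comp_mul_left_Ioi (fun x => Real.exp (-x)) a hb
  simp only [smul_eq_mul] at this
  rw [show (fun x => Real.exp (-(b*x))) = (fun x => Real.exp (-(b*x))) from rfl]
  calc (∫ x in Set.Ioi a, Real.exp (-(b * x)))
      = b⁻¹ * ∫ x in Set.Ioi (b * a), Real.exp (-x) := this
    _ = Real.exp (-(b * a)) / b := by rw [integral_exp_neg_Ioi]; ring

lemma aux_tail (a b α : ℝ) (ha : 0 < a) (hb : 0 < b) (hα0 : 0 < α) (hα1 : α ≤ 1) :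
    (∫ τ in Set.Ioi a, b ^ α / Real.Gamma α * τ ^ (α - 1) * Real.exp (-(b * τ)))
      ≤ b ^ (α - 1) * a ^ (α - 1) / Real.Gamma α * Real.exp (-(b * a)) := by
  have hΓ : 0 < Real.Gamma α := Real.Gamma_pos_of_pos hα0
  set C : ℝ := b ^ α / Real.Gamma α * a ^ (α - 1) with hCdef
  have hC : 0 ≤ C :=
    mul_nonneg (div_nonneg (Real.rpow_nonneg hb.le _) hΓ.le) (Real.rpow_nonneg ha.le _)
  have hg : IntegrableOn (fun τ : ℝ => C * Real.exp (-(b * τ))) (Set.Ioi a) := by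
    have := exp_neg_integrableOn_Ioi a hb
    simp only [neg_mul] at this
    exact this.const_mul C
  have hbound : ∀ τ ∈ Set.Ioi a,
      b ^ α / Real.Gamma α * τ ^ (α - 1) * Real.exp (-(b * τ)) ≤ C * Real.exp (-(b * τ)) := by
    intro τ hτ
    have hτa : a ≤ τ := le_of_lt hτ
    have h1 : τ ^ (α - 1) ≤ a ^ (α - 1) :=
      Real.rpow_le_rpow_of_nonpos ha hτa (by linarith)
    have : b ^ α / Real.Gamma α * τ ^ (α - 1) ≤ C := by
      rw [hCdef]
      exact mul_le_mul_of_nonneg_left h1 (div_nonneg (Real.rpow_nonneg hb.le _) hΓ.le)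
    exact mul_le_mul_of_nonneg_right this (Real.exp_pos _).le
  have hmeas : AEStronglyMeasurable
      (fun τ : ℝ => b ^ α / Real.Gamma α * τ ^ (α - 1) * Real.exp (-(b * τ)))
      (volume.restrict (Set.Ioi a)) := by
    apply Measurable.aestronglyMeasurable
    exact ((measurable_const.mul (measurable_id.pow_const _)).mul
      ((measurable_const.mul measurable_id).neg.exp))
  have hf : IntegrableOn
      (fun τ : ℝ => b ^ α / Real.Gamma α * τ ^ (α - 1) * Real.exp (-(b * τ)))
      (Set.Ioi a) := by
    refine hg.mono' hmeas ?_
    filter_upwards [ae_restrict_mem measurableSet_Ioi] with τ hτ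
    rw [Real.norm_eq_abs, abs_of_nonneg]
    · exact hbound τ hτ
    · have : (0:ℝ) < τ := lt_trans ha hτ
      positivity
  calc (∫ τ in Set.Ioi a, b ^ α / Real.Gamma α * τ ^ (α - 1) * Real.exp (-(b * τ)))
      ≤ ∫ τ in Set.Ioi a, C * Real.exp (-(b * τ)) :=
        setIntegral_mono_on hf hg measurableSet_Ioi hbound
    _ = C * (Real.exp (-(b * a)) / b) := by
        rw [integral_const_mul, aux_int_exp a b hb]
    _ = b ^ (α - 1) * a ^ (α - 1) / Real.Gamma α * Real.exp (-(b * a)) := by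
        rw [hCdef, Real.rpow_sub hb, Real.rpow_one]
        ring

set_option maxHeartbeats 1000000 in
/-- The Gamma hyperprior with shape `α ∈ (0,1]` and rate `βₙ = c_β nεₙ²/(τ²)*`
satisfies Assumption A5: its density is decreasing on `(0,∞)`, sufficiently thick
at `c₁(τ²)*`, and has tail mass beyond `c₂(τ²)*` at most `exp(-5nεₙ²)`, eventually. -/
theorem stmt_14 (m0 : ℕ) (hm0 : 1 ≤ m0) (α c_β : ℝ)
    (hα0 : 0 < α) (hα1 : α ≤ 1) (hc : 0 < c_β) :
    let εn : ℕ → ℝ := fun n =>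
      (n : ℝ) ^ (-(m0 : ℝ) / (2 * m0 + 1)) * Real.sqrt (Real.log n)
    let τs : ℕ → ℝ := fun n => (n : ℝ) ^ (-(1 : ℝ) / (2 * m0 + 1))
    let βn : ℕ → ℝ := fun n => c_β * ((n : ℝ) * (εn n) ^ 2) / τs n
    let pn : ℕ → ℝ → ℝ := fun n τ =>
      (βn n) ^ α / Real.Gamma α * τ ^ (α - 1) * Real.exp (-(βn n * τ))
    (∀ n : ℕ, AntitoneOn (pn n) (Set.Ioi 0)) ∧
    (∃ c1 : ℝ, 0 < c1 ∧ ∃ N : ℕ, ∀ n ≥ N,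
      Real.exp (-((n : ℝ) * (εn n) ^ 2)) ≤ pn n (c1 * τs n)) ∧
    (∃ c2 : ℝ, 0 < c2 ∧ ∃ N : ℕ, ∀ n ≥ N,
      (∫ τ in Set.Ioi (c2 * τs n), pn n τ)
        ≤ Real.exp (-(5 * ((n : ℝ) * (εn n) ^ 2)))) := by
  intro εn τs βn pn
  have hΓ : 0 < Real.Gamma α := Real.Gamma_pos_of_pos hα0
  set d : ℝ := 2 * (m0 : ℝ) + 1 with hd_def
  have hd : (1:ℝ) ≤ d := by
    have : (1:ℝ) ≤ (m0:ℝ) := by exact_mod_cast hm0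
    simp only [hd_def]; linarith
  have hd0 : (0:ℝ) < d := by linarith
  have hβ_nonneg : ∀ n : ℕ, 0 ≤ βn n := by
    intro n
    apply div_nonneg
    · exact mul_nonneg hc.le (mul_nonneg (Nat.cast_nonneg n) (sq_nonneg _))
    · exact Real.rpow_nonneg (Nat.cast_nonneg n) _
  have hx_eq : ∀ n : ℕ, 1 ≤ n →
      (n : ℝ) * (εn n) ^ 2 = (n : ℝ) ^ ((1:ℝ)/d) * Real.log n := by
    intro n hn
    have hn1 : (1:ℝ) ≤ (n:ℝ) := by exact_mod_cast hn
    have hnp : (0:ℝ) < (n:ℝ) := by linarith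
    have hlog : 0 ≤ Real.log n := Real.log_nonneg hn1
    have h1 : (εn n) ^ 2 = (n:ℝ) ^ (-(m0:ℝ)/d * 2) * Real.log n := by
      simp only [εn]
      rw [mul_pow, Real.sq_sqrt hlog, ← Real.rpow_natCast ((n:ℝ) ^ (-(m0:ℝ)/d)) 2,
        ← Real.rpow_mul hnp.le]
      norm_num
    rw [h1, ← mul_assoc]
    congr 1
    rw [show (n:ℝ) * (n:ℝ) ^ (-(m0:ℝ)/d * 2) = (n:ℝ) ^ (1:ℝ) * (n:ℝ) ^ (-(m0:ℝ)/d * 2) by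
      rw [Real.rpow_one], ← Real.rpow_add hnp]
    congr 1
    field_simp
    ring
  have hτs_pos : ∀ n : ℕ, 1 ≤ n → 0 < τs n := by
    intro n hn
    have hnp : (0:ℝ) < (n:ℝ) := by exact_mod_cast hn
    exact Real.rpow_pos_of_pos hnp _
  have hτs_le_one : ∀ n : ℕ, 1 ≤ n → τs n ≤ 1 := by
    intro n hn
    have hn1 : (1:ℝ) ≤ (n:ℝ) := by exact_mod_cast hn
    apply Real.rpow_le_one_of_one_le_of_nonpos hn1
    have h0 : (0:ℝ) ≤ 2 * (m0:ℝ) + 1 := by positivity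
    apply div_nonpos_of_nonpos_of_nonneg <;> [norm_num; exact h0]
  have hlog_τs : ∀ n : ℕ, 1 ≤ n → Real.log (τs n) = (-1/d) * Real.log n := by
    intro n hn
    have hnp : (0:ℝ) < (n:ℝ) := by exact_mod_cast hn
    simp only [τs, hd_def]
    rw [Real.log_rpow hnp]
  have hx_ge_log : ∀ n : ℕ, 1 ≤ n → Real.log n ≤ (n : ℝ) * (εn n) ^ 2 := by
    intro n hn
    have hn1 : (1:ℝ) ≤ (n:ℝ) := by exact_mod_cast hn
    have hlog : 0 ≤ Real.log n := Real.log_nonneg hn1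
    rw [hx_eq n hn]
    have h1 : (1:ℝ) ≤ (n:ℝ) ^ ((1:ℝ)/d) := Real.one_le_rpow hn1 (by positivity)
    nlinarith
  have hβ_mul : ∀ (n : ℕ) (c : ℝ), 1 ≤ n →
      βn n * (c * τs n) = (c * c_β) * ((n : ℝ) * (εn n) ^ 2) := by
    intro n c hn
    have hτ : τs n ≠ 0 := (hτs_pos n hn).ne'
    simp only [βn]
    field_simp
  have hβ_ge : ∀ n : ℕ, 1 ≤ n → c_β * ((n : ℝ) * (εn n) ^ 2) ≤ βn n := by
    intro n hn
    have hτp := hτs_pos n hn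
    have hτ1 := hτs_le_one n hn
    have hx0 : 0 ≤ (n : ℝ) * (εn n) ^ 2 :=
      mul_nonneg (Nat.cast_nonneg n) (sq_nonneg _)
    simp only [βn]
    rw [le_div_iff₀ hτp]
    nlinarith [mul_nonneg (mul_nonneg hc.le hx0) (sub_nonneg.2 hτ1)]
  refine ⟨?_, ?_, ?_⟩
  · -- antitonicity
    intro n
    exact aux_antitone ((βn n) ^ α / Real.Gamma α) (βn n) α
      (div_nonneg (Real.rpow_nonneg (hβ_nonneg n) _) hΓ.le) (hβ_nonneg n) hα1
  · -- thickness
    refine ⟨min 1 (1/(2*c_β)), lt_min one_pos (by positivity), ?_⟩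
    set c1 : ℝ := min 1 (1/(2*c_β)) with hc1_def
    have hc1_pos : 0 < c1 := lt_min one_pos (by positivity)
    have hc1_le1 : c1 ≤ 1 := min_le_left _ _
    set K : ℝ := max (2 * |Real.log (Real.Gamma α)|) (1/c_β) with hK_def
    refine ⟨max 1 ⌈Real.exp K⌉₊, fun n hn => ?_⟩
    have hn1 : 1 ≤ n := le_trans (le_max_left _ _) hn
    have hn1' : (1:ℝ) ≤ (n:ℝ) := by exact_mod_cast hn1
    have hnp : (0:ℝ) < (n:ℝ) := by linarith
    have hlogK : K ≤ Real.log n := by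
      rw [Real.le_log_iff_exp_le hnp]
      calc Real.exp K ≤ (⌈Real.exp K⌉₊ : ℝ) := Nat.le_ceil _
        _ ≤ (n : ℝ) := by exact_mod_cast le_trans (le_max_right 1 _) hn
    set x : ℝ := (n : ℝ) * (εn n) ^ 2 with hx_def
    have hxK : K ≤ x := le_trans hlogK (hx_ge_log n hn1)
    have hx0 : 0 ≤ x := by
      have h1 : (0:ℝ) ≤ 1/c_β := by positivity
      have h2 : 1/c_β ≤ K := le_max_right _ _
      linarith
    have hβ1 : (1:ℝ) ≤ βn n := by
      have h1 : c_β * x ≤ βn n := hβ_ge n hn1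
      have h2 : (1:ℝ) ≤ c_β * x := by
        have h3 : 1/c_β ≤ x := le_trans (le_max_right _ _) hxK
        rw [div_le_iff₀ hc] at h3
        linarith [mul_comm x c_β]
      linarith
    have hbase_pos : 0 < c1 * τs n := mul_pos hc1_pos (hτs_pos n hn1)
    have hbase_le1 : c1 * τs n ≤ 1 := by
      nlinarith [hτs_pos n hn1, hτs_le_one n hn1]
    have hexp_le : βn n * (c1 * τs n) ≤ x / 2 := by
      rw [hβ_mul n c1 hn1, ← hx_def]
      have hc1c : c1 * c_β ≤ 1/2 := by
        have h : c1 ≤ 1/(2*c_β) := min_le_right _ _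
        rw [le_div_iff₀ (by positivity)] at h
        linarith
      nlinarith
    have hΓ_le : Real.Gamma α ≤ Real.exp (x / 2) := by
      rw [← Real.exp_log hΓ]
      apply Real.exp_le_exp.2
      have h1 : 2 * |Real.log (Real.Gamma α)| ≤ x := le_trans (le_max_left _ _) hxK
      have h2 := le_abs_self (Real.log (Real.Gamma α))
      linarith
    show Real.exp (-x) ≤ (βn n) ^ α / Real.Gamma α * (c1 * τs n) ^ (α - 1)
        * Real.exp (-(βn n * (c1 * τs n)))
    have h1 : (1:ℝ) ≤ (βn n) ^ α := Real.one_le_rpow hβ1 hα0.le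
    have h2 : (1:ℝ) ≤ (c1 * τs n) ^ (α - 1) :=
      Real.one_le_rpow_of_pos_of_le_one_of_nonpos hbase_pos hbase_le1 (by linarith)
    have h3 : Real.exp (-(x/2)) ≤ Real.exp (-(βn n * (c1 * τs n))) :=
      Real.exp_le_exp.2 (by linarith)
    have step1 : Real.exp (-x) ≤ 1 / Real.Gamma α * Real.exp (-(x/2)) := by
      rw [div_mul_eq_mul_div, one_mul, le_div_iff₀ hΓ]
      calc Real.exp (-x) * Real.Gamma α ≤ Real.exp (-x) * Real.exp (x/2) :=
            mul_le_mul_of_nonneg_left hΓ_le (Real.exp_pos _).le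
        _ = Real.exp (-(x/2)) := by rw [← Real.exp_add]; ring_nf
    calc Real.exp (-x) ≤ 1 / Real.Gamma α * Real.exp (-(x/2)) := step1
      _ ≤ (βn n) ^ α / Real.Gamma α * (c1 * τs n) ^ (α - 1) * Real.exp (-(x/2)) := by
          apply mul_le_mul_of_nonneg_right _ (Real.exp_pos _).le
          have hA : 1 / Real.Gamma α ≤ (βn n) ^ α / Real.Gamma α := by gcongr
          calc 1 / Real.Gamma α = 1 / Real.Gamma α * 1 := by ring
            _ ≤ (βn n) ^ α / Real.Gamma α * (c1 * τs n) ^ (α - 1) :=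
                mul_le_mul hA h2 zero_le_one (by positivity)
      _ ≤ _ := mul_le_mul_of_nonneg_left h3 (by positivity)
  · -- tail bound
    refine ⟨max 1 (8/c_β), lt_of_lt_of_le one_pos (le_max_left _ _), ?_⟩
    set c2 : ℝ := max 1 (8/c_β) with hc2_def
    have hc2_1 : (1:ℝ) ≤ c2 := le_max_left _ _
    have hc2_pos : 0 < c2 := lt_of_lt_of_le one_pos hc2_1
    have hc2c : (8:ℝ) ≤ c2 * c_β := by
      have h : 8/c_β ≤ c2 := le_max_right _ _
      rw [div_le_iff₀ hc] at h
      linarith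
    set K : ℝ := max (max (1/c_β) (|Real.log (Real.Gamma α)|)) (d * Real.log c2)
      with hK_def
    refine ⟨max 1 ⌈Real.exp K⌉₊, fun n hn => ?_⟩
    have hn1 : 1 ≤ n := le_trans (le_max_left _ _) hn
    have hn1' : (1:ℝ) ≤ (n:ℝ) := by exact_mod_cast hn1
    have hnp : (0:ℝ) < (n:ℝ) := by linarith
    have hlogK : K ≤ Real.log n := by
      rw [Real.le_log_iff_exp_le hnp]
      calc Real.exp K ≤ (⌈Real.exp K⌉₊ : ℝ) := Nat.le_ceil _
        _ ≤ (n : ℝ) := by exact_mod_cast le_trans (le_max_right 1 _) hn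
    set x : ℝ := (n : ℝ) * (εn n) ^ 2 with hx_def
    have hxlog : Real.log n ≤ x := hx_ge_log n hn1
    have hxK : K ≤ x := le_trans hlogK hxlog
    have hx0 : 0 ≤ x := by
      have h1 : (0:ℝ) ≤ 1/c_β := by positivity
      have h2 : 1/c_β ≤ K := le_trans (le_max_left _ _) (le_max_left _ _)
      linarith
    have hτp := hτs_pos n hn1
    have hτ1 := hτs_le_one n hn1
    have hβ1 : (1:ℝ) ≤ βn n := by
      have h1 : c_β * x ≤ βn n := hβ_ge n hn1
      have h2 : (1:ℝ) ≤ c_β * x := by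
        have h3 : 1/c_β ≤ x := le_trans (le_trans (le_max_left _ _) (le_max_left _ _)) hxK
        rw [div_le_iff₀ hc] at h3
        linarith [mul_comm x c_β]
      linarith
    have hβp : (0:ℝ) < βn n := lt_of_lt_of_le one_pos hβ1
    have hlogc2 : 0 ≤ Real.log c2 := Real.log_nonneg hc2_1
    have hlogn : 0 ≤ Real.log n := Real.log_nonneg hn1'
    have hlc2 : Real.log c2 ≤ Real.log n / d := by
      have h1 : d * Real.log c2 ≤ Real.log n := le_trans (le_max_right _ _) hlogK
      rw [le_div_iff₀ hd0]
      linarith [mul_comm (Real.log c2) d]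
    have hlog_prod : Real.log (c2 * τs n) ≤ 0 := by
      rw [Real.log_mul hc2_pos.ne' hτp.ne', hlog_τs n hn1,
        show (-1/d) * Real.log n = -(Real.log n / d) by ring]
      linarith
    have hc2τ_pos : 0 < c2 * τs n := mul_pos hc2_pos hτp
    have hc2τ_le1 : c2 * τs n ≤ 1 := by
      calc c2 * τs n = Real.exp (Real.log (c2 * τs n)) := (Real.exp_log hc2τ_pos).symm
        _ ≤ Real.exp 0 := Real.exp_le_exp.2 hlog_prod
        _ = 1 := Real.exp_zero
    have htail := aux_tail (c2 * τs n) (βn n) α hc2τ_pos hβp hα0 hα1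
    have hba : βn n * (c2 * τs n) = (c2 * c_β) * x := hβ_mul n c2 hn1
    have hf1 : (βn n) ^ (α - 1) ≤ 1 :=
      Real.rpow_le_one_of_one_le_of_nonpos hβ1 (by linarith)
    have hf2 : (c2 * τs n) ^ (α - 1) ≤ Real.exp x := by
      rw [Real.rpow_def_of_pos hc2τ_pos]
      apply Real.exp_le_exp.2
      set L : ℝ := Real.log (c2 * τs n) with hL_def
      have h1 : (α - 1) * L ≤ - L := by
        have hp : 0 ≤ α * (-L) := mul_nonneg hα0.le (by linarith [hlog_prod])
        nlinarith [hp]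
      have h2 : - L ≤ x := by
        rw [hL_def, Real.log_mul hc2_pos.ne' hτp.ne', hlog_τs n hn1]
        have h3 : Real.log n / d ≤ Real.log n := by
          rw [div_le_iff₀ hd0]
          nlinarith [mul_nonneg hlogn (by linarith : (0:ℝ) ≤ d - 1)]
        rw [show -(Real.log c2 + (-1/d) * Real.log n)
            = -Real.log c2 + Real.log n / d by ring]
        linarith
      linarith
    have hf3 : (Real.Gamma α)⁻¹ ≤ Real.exp (2*x) := by
      rw [← Real.exp_log hΓ, ← Real.exp_neg]
      apply Real.exp_le_exp.2
      have h1 : |Real.log (Real.Gamma α)| ≤ x :=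
        le_trans (le_trans (le_max_right _ _) (le_max_left _ _)) hxK
      have h2 := neg_abs_le (Real.log (Real.Gamma α))
      linarith
    have hf4 : Real.exp (-(βn n * (c2 * τs n))) ≤ Real.exp (-(8*x)) := by
      apply Real.exp_le_exp.2
      rw [hba]
      nlinarith [mul_nonneg (sub_nonneg.2 hc2c) hx0]
    calc (∫ τ in Set.Ioi (c2 * τs n), pn n τ)
        ≤ (βn n) ^ (α - 1) * (c2 * τs n) ^ (α - 1) / Real.Gamma α
            * Real.exp (-(βn n * (c2 * τs n))) := htail
      _ ≤ 1 * Real.exp x * (Real.Gamma α)⁻¹ * Real.exp (-(8*x)) := by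
          rw [div_eq_mul_inv]
          have hA : (βn n) ^ (α - 1) * (c2 * τs n) ^ (α - 1) ≤ 1 * Real.exp x :=
            mul_le_mul hf1 hf2 (Real.rpow_nonneg hc2τ_pos.le _) zero_le_one
          exact mul_le_mul (mul_le_mul_of_nonneg_right hA (inv_nonneg.2 hΓ.le)) hf4
            (Real.exp_pos _).le (by positivity)
      _ ≤ 1 * Real.exp x * Real.exp (2*x) * Real.exp (-(8*x)) := by
          apply mul_le_mul_of_nonneg_right _ (Real.exp_pos _).le
          exact mul_le_mul_of_nonneg_left hf3 (by positivity)
      _ = Real.exp (-(5 * x)) := by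
          rw [one_mul, ← Real.exp_add, ← Real.exp_add]
          congr 1
          ring
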